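/- Let D be a delta-matroid on ground set E and e ∈ E such that the minimum feasible-set sizes of D and D^{*|e} are equal. Then D and D^{*|e} have the same collection of minimum-cardinality feasible sets. -/
import Mathlib


open Finset Polynomial

variable {α : Type*} [DecidableEq α]

/-- The twist of a collection of feasible sets with respect to `A`. -/
noncomputable def SS.twist (A : Finset α) (F : Finset (Finset α)) : Finset (Finset α) :=
  F.image (fun X => symmDiff A X)

/-- Loop complementation at a single element `e`. -/
noncomputable def SS.lc (e : α) (F : Finset (Finset α)) : Finset (Finset α) :=
  symmDiff F ((F.filter (fun X => e ∉ X)).image (insert e))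

/-- The two generating operations: twist `*` and loop complementation `×`. -/
inductive SS.Op | star | cross

/-- Apply a single operation at a single element. -/
noncomputable def SS.opElem : SS.Op → α → Finset (Finset α) → Finset (Finset α)
  | .star, e, F => SS.twist {e} F
  | .cross, e, F => SS.lc e F

/-- Apply a word in `{*, ×}` at a single element. -/
noncomputable def SS.wordElem (w : List SS.Op) (e : α) (F : Finset (Finset α)) : Finset (Finset α) :=
  w.foldl (fun F o => SS.opElem o e F) F

/-- Apply a word in `{*, ×}` elementwise on a subset `A`. -/
noncomputable def SS.wordOn (w : List SS.Op) (A : Finset α) (F : Finset (Finset α)) : Finset (Finset α) :=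
  A.toList.foldl (fun F e => SS.wordElem w e F) F

/-- Size of a largest feasible set. -/
noncomputable def SS.rmax (F : Finset (Finset α)) : ℕ := F.sup Finset.card

/-- Size of a smallest feasible set. -/
noncomputable def SS.rmin (F : Finset (Finset α)) : ℕ := sInf (Finset.card '' (F : Set (Finset α)))

/-- The width of a set system. -/
noncomputable def SS.width (F : Finset (Finset α)) : ℕ := SS.rmax F - SS.rmin F

/-- The minimum-cardinality feasible sets. -/
noncomputable def SS.Fmin (F : Finset (Finset α)) : Finset (Finset α) :=
  F.filter (fun X => X.card = SS.rmin F)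

/-- The maximum-cardinality feasible sets. -/
noncomputable def SS.Fmax (F : Finset (Finset α)) : Finset (Finset α) :=
  F.filter (fun X => X.card = SS.rmax F)

/-- The partial-`w` polynomial of a set system with ground set `E`. -/
noncomputable def SS.poly (w : List SS.Op) (E : Finset α) (F : Finset (Finset α)) :
    Polynomial ℤ :=
  ∑ A ∈ E.powerset, (Polynomial.X : Polynomial ℤ) ^ SS.width (SS.wordOn w A F)

/-- A proper set system satisfying the symmetric exchange axiom. -/
noncomputable def SS.IsDeltaMatroid (F : Finset (Finset α)) : Prop :=
  F.Nonempty ∧ ∀ X ∈ F, ∀ Y ∈ F, ∀ u ∈ symmDiff X Y,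
    ∃ v ∈ symmDiff X Y, symmDiff X {u, v} ∈ F

/-- Apply a sequence of single-element twists and loop complementations. -/
noncomputable def SS.seqApply : List (SS.Op × α) → Finset (Finset α) → Finset (Finset α)
  | [], F => F
  | (o, e) :: s, F => SS.seqApply s (SS.opElem o e F)

/-- A set system is vf-safe if every sequence of single-element twists and loop
complementations yields a delta-matroid. -/
noncomputable def SS.VfSafe (F : Finset (Finset α)) : Prop :=
  ∀ s : List (SS.Op × α), SS.IsDeltaMatroid (SS.seqApply s F)

/-- The direct sum of two set systems. -/
noncomputable def SS.dsum (F F' : Finset (Finset α)) : Finset (Finset α) :=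
  (F ×ˢ F').image (fun p => p.1 ∪ p.2)

open SS

section Aux

variable {α : Type*} [DecidableEq α]

lemma SS.sd_singleton_of_mem {e : α} {X : Finset α} (h : e ∈ X) :
    symmDiff {e} X = X.erase e := by
  ext a; simp only [Finset.mem_symmDiff, Finset.mem_erase, Finset.mem_singleton]
  by_cases hae : a = e <;> simp [hae, h]

lemma SS.sd_singleton_of_notMem {e : α} {X : Finset α} (h : e ∉ X) :
    symmDiff {e} X = insert e X := by
  ext a; simp only [Finset.mem_symmDiff, Finset.mem_insert, Finset.mem_singleton]
  by_cases hae : a = e <;> simp [hae, h]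

lemma SS.sd_pair_both {u v : α} {Y : Finset α} (hu : u ∈ Y) (hv : v ∈ Y) (huv : u ≠ v) :
    symmDiff Y {u, v} = (Y.erase u).erase v := by
  ext a; simp only [Finset.mem_symmDiff, Finset.mem_erase, Finset.mem_insert,
    Finset.mem_singleton]
  by_cases h1 : a = u <;> by_cases h2 : a = v <;> simp [h1, h2, hu, hv, huv]

lemma SS.sd_pair_mixed {u v : α} {Y : Finset α} (hu : u ∈ Y) (hv : v ∉ Y) (huv : u ≠ v) :
    symmDiff Y {u, v} = insert v (Y.erase u) := by
  ext a; simp only [Finset.mem_symmDiff, Finset.mem_erase, Finset.mem_insert,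
    Finset.mem_singleton]
  by_cases h1 : a = u <;> by_cases h2 : a = v <;> simp [h1, h2, hu, hv, huv] <;> tauto

lemma SS.sd_pair_self {u : α} {Y : Finset α} (hu : u ∈ Y) :
    symmDiff Y {u, u} = Y.erase u := by
  ext a; simp only [Finset.mem_symmDiff, Finset.mem_erase, Finset.mem_insert,
    Finset.mem_singleton]
  by_cases h1 : a = u <;> simp [h1, hu]

lemma SS.mem_twist {A : Finset α} {F : Finset (Finset α)} {X : Finset α} :
    X ∈ SS.twist A F ↔ symmDiff A X ∈ F := by
  constructor
  · intro h
    obtain ⟨Y, hY, rfl⟩ := Finset.mem_image.1 h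
    rwa [symmDiff_symmDiff_cancel_left]
  · intro h
    exact Finset.mem_image.2 ⟨_, h, symmDiff_symmDiff_cancel_left A X⟩

lemma SS.twist_twist (A : Finset α) (F : Finset (Finset α)) :
    SS.twist A (SS.twist A F) = F := by
  ext X
  rw [SS.mem_twist, SS.mem_twist, symmDiff_symmDiff_cancel_left]

lemma SS.isDM_twist {F : Finset (Finset α)} (h : SS.IsDeltaMatroid F) (A : Finset α) :
    SS.IsDeltaMatroid (SS.twist A F) := by
  obtain ⟨hne, hex⟩ := h
  refine ⟨hne.image _, ?_⟩
  intro X hX Y hY u hu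
  rw [SS.mem_twist] at hX hY
  have key : symmDiff (symmDiff A X) (symmDiff A Y) = symmDiff X Y := by
    rw [symmDiff_symmDiff_symmDiff_comm, symmDiff_self, bot_symmDiff]
  obtain ⟨v, hv, hXv⟩ := hex _ hX _ hY u (by rwa [key])
  refine ⟨v, by rwa [key] at hv, ?_⟩
  rw [SS.mem_twist]
  rwa [symmDiff_assoc] at hXv

lemma SS.exists_rmin {F : Finset (Finset α)} (h : F.Nonempty) :
    ∃ X ∈ F, X.card = SS.rmin F := by
  obtain ⟨X0, hX0⟩ := h
  have hne : (Finset.card '' (F : Set (Finset α))).Nonempty :=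
    ⟨X0.card, ⟨X0, by simpa using hX0, rfl⟩⟩
  obtain ⟨X, hX, hc⟩ := Nat.sInf_mem hne
  exact ⟨X, by simpa using hX, hc⟩

lemma SS.rmin_le {F : Finset (Finset α)} {X : Finset α} (h : X ∈ F) :
    SS.rmin F ≤ X.card :=
  Nat.sInf_le ⟨X, by simpa using h, rfl⟩

lemma SS.Fmin_subset_twist {F : Finset (Finset α)} (hD : SS.IsDeltaMatroid F) (e : α)
    (h : SS.rmin F = SS.rmin (SS.twist {e} F)) :
    SS.Fmin F ⊆ SS.Fmin (SS.twist {e} F) := by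
  obtain ⟨hne, hex⟩ := hD
  set r := SS.rmin F with hr
  -- every feasible set containing e has size ≥ r + 1
  have fact2 : ∀ Z ∈ F, e ∈ Z → r + 1 ≤ Z.card := by
    intro Z hZ heZ
    have h1 : symmDiff {e} Z ∈ SS.twist {e} F := SS.mem_twist.2 (by
      rwa [symmDiff_symmDiff_cancel_left])
    have h2 : r ≤ (symmDiff {e} Z).card := le_trans h.le (SS.rmin_le h1)
    rw [SS.sd_singleton_of_mem heZ, Finset.card_erase_of_mem heZ] at h2
    have : 1 ≤ Z.card := Finset.card_pos.2 ⟨e, heZ⟩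
    omega
  -- there is a feasible set containing e of size exactly r + 1
  have fact3 : ∃ Y₀ ∈ F, e ∈ Y₀ ∧ Y₀.card = r + 1 := by
    have htne : (SS.twist {e} F).Nonempty := by
      unfold SS.twist; exact hne.image _
    obtain ⟨W, hW, hWc⟩ := SS.exists_rmin htne
    rw [← h] at hWc
    have hWF : symmDiff {e} W ∈ F := SS.mem_twist.1 hW
    by_cases heW : e ∈ W
    · exfalso
      have h1 : r ≤ (symmDiff {e} W).card := SS.rmin_le hWF
      rw [SS.sd_singleton_of_mem heW, Finset.card_erase_of_mem heW, hWc] at h1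
      have : 1 ≤ W.card := Finset.card_pos.2 ⟨e, heW⟩
      omega
    · refine ⟨symmDiff {e} W, hWF, ?_, ?_⟩
      · rw [SS.sd_singleton_of_notMem heW]; exact Finset.mem_insert_self e W
      · rw [SS.sd_singleton_of_notMem heW, Finset.card_insert_of_notMem heW, hWc]
  intro X hX
  rw [SS.Fmin, Finset.mem_filter] at hX
  obtain ⟨hXF, hXc⟩ := hX
  rw [← hr] at hXc
  have heX : e ∉ X := by
    intro heX
    have := fact2 X hXF heX
    omega
  -- pick Y in S minimizing |X Δ Y|
  set S := F.filter (fun Y => e ∈ Y ∧ Y.card = r + 1) with hS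
  have hSne : S.Nonempty := by
    obtain ⟨Y₀, h1, h2, h3⟩ := fact3
    exact ⟨Y₀, Finset.mem_filter.2 ⟨h1, h2, h3⟩⟩
  obtain ⟨Y, hYS, hmin⟩ := Finset.exists_min_image S (fun Y => (symmDiff X Y).card) hSne
  rw [hS, Finset.mem_filter] at hYS
  obtain ⟨hYF, heY, hYc⟩ := hYS
  -- claim : Y ⊆ insert e X
  have hsub : Y ⊆ insert e X := by
    intro u hu
    rw [Finset.mem_insert]
    by_contra hcon
    push_neg at hcon
    obtain ⟨hue, huX⟩ := hcon
    have huYX : u ∈ symmDiff Y X := Finset.mem_symmDiff.2 (Or.inl ⟨hu, huX⟩)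
    obtain ⟨v, hv, hZ⟩ := hex Y hYF X hXF u huYX
    have hZr : r ≤ (symmDiff Y {u, v}).card := SS.rmin_le hZ
    rcases eq_or_ne v u with rfl | hvu
    · -- v = u : Z = Y.erase u contains e, card r : contradiction
      rw [SS.sd_pair_self hu] at hZ
      have := fact2 _ hZ (Finset.mem_erase.2 ⟨Ne.symm hue, heY⟩)
      rw [Finset.card_erase_of_mem hu, hYc] at this
      omega
    rcases eq_or_ne v e with hve | hve
    · -- v = e : Z = (Y.erase u).erase e, card r - 1 < r : contradiction
      rw [hve, SS.sd_pair_both hu heY hue] at hZr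
      have he' : e ∈ Y.erase u := Finset.mem_erase.2 ⟨Ne.symm hue, heY⟩
      rw [Finset.card_erase_of_mem he', Finset.card_erase_of_mem hu, hYc] at hZr
      have : 1 ≤ (Y.erase u).card := Finset.card_pos.2 ⟨e, he'⟩
      rw [Finset.card_erase_of_mem hu, hYc] at this
      omega
    rcases Finset.mem_symmDiff.1 hv with ⟨hvY, hvX⟩ | ⟨hvX, hvY⟩
    · -- v ∈ Y \ X : Z ⊆ Y.erase u contains e, card ≤ r : contradiction
      rw [SS.sd_pair_both hu hvY (Ne.symm hvu)] at hZ
      have heZ : e ∈ (Y.erase u).erase v :=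
        Finset.mem_erase.2 ⟨Ne.symm hve, Finset.mem_erase.2 ⟨Ne.symm hue, heY⟩⟩
      have h1 := fact2 _ hZ heZ
      have h2 : ((Y.erase u).erase v).card ≤ (Y.erase u).card :=
        Finset.card_le_card (Finset.erase_subset _ _)
      rw [Finset.card_erase_of_mem hu, hYc] at h2
      omega
    · -- v ∈ X \ Y : Z ∈ S with strictly smaller symmetric difference to X
      have hZc : (symmDiff Y {u, v}).card = r + 1 := by
        rw [SS.sd_pair_mixed hu hvY (Ne.symm hvu)]
        rw [Finset.card_insert_of_notMem (fun hc => hvY (Finset.mem_of_mem_erase hc)),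
          Finset.card_erase_of_mem hu, hYc]
        omega
      have heZ : e ∈ symmDiff Y {u, v} := by
        rw [SS.sd_pair_mixed hu hvY (Ne.symm hvu)]
        exact Finset.mem_insert.2 (Or.inr (Finset.mem_erase.2 ⟨Ne.symm hue, heY⟩))
      have hZS : symmDiff Y {u, v} ∈ S := Finset.mem_filter.2 ⟨hZ, heZ, hZc⟩
      have hle := hmin _ hZS
      have hrw : symmDiff X (symmDiff Y {u, v}) = symmDiff (symmDiff X Y) {u, v} :=
        (symmDiff_assoc X Y {u, v}).symm
      have huXY : u ∈ symmDiff X Y := Finset.mem_symmDiff.2 (Or.inr ⟨hu, huX⟩)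
      have hvXY : v ∈ symmDiff X Y := Finset.mem_symmDiff.2 (Or.inl ⟨hvX, hvY⟩)
      have hlt : (symmDiff X (symmDiff Y {u, v})).card < (symmDiff X Y).card := by
        rw [hrw, SS.sd_pair_both huXY hvXY (Ne.symm hvu)]
        calc (((symmDiff X Y).erase u).erase v).card
            ≤ ((symmDiff X Y).erase u).card := Finset.card_le_card (Finset.erase_subset _ _)
          _ < (symmDiff X Y).card := Finset.card_erase_lt_of_mem huXY
      omega
  have hYeq : Y = insert e X := by
    apply Finset.eq_of_subset_of_card_le hsub
    rw [Finset.card_insert_of_notMem heX, hXc, hYc]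
  have hXtw : X ∈ SS.twist {e} F := by
    rw [SS.mem_twist, SS.sd_singleton_of_notMem heX, ← hYeq]
    exact hYF
  rw [SS.Fmin, Finset.mem_filter]
  exact ⟨hXtw, hXc.trans h⟩

end Aux

theorem stmt9 (F : Finset (Finset α)) (hD : SS.IsDeltaMatroid F) (e : α)
    (h : SS.rmin F = SS.rmin (SS.twist {e} F)) :
    SS.Fmin F = SS.Fmin (SS.twist {e} F) := by
  apply Finset.Subset.antisymm
  · exact SS.Fmin_subset_twist hD e h
  · have h2 : SS.rmin (SS.twist {e} F) = SS.rmin (SS.twist {e} (SS.twist {e} F)) := by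
      rw [SS.twist_twist]; exact h.symm
    have := SS.Fmin_subset_twist (SS.isDM_twist hD {e}) e h2
    rwa [SS.twist_twist] at this
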